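/- With the notation of the weak teleportation setup (ψ, ξ, F, U as in Proposition 3.1), for every density operator ρ on H1 one has tr_{123}(F(ρ ⊗ |ψ⟩⟨ψ|)F) = 1/N (a constant independent of ρ), and consequently U · [tr_{12}(F(ρ ⊗ |ψ⟩⟨ψ|)F) / tr(F(ρ ⊗ |ψ⟩⟨ψ|)F)] · U* = ρ. -/

import Mathlib

open scoped BigOperators ComplexOrder

noncomputable def ptrace12 {ι₁ ι₂ ι₃ : Type*} [Fintype ι₁] [Fintype ι₂]
    (Q : Matrix (ι₁ × ι₂ × ι₃) (ι₁ × ι₂ × ι₃) ℂ) : Matrix ι₃ ι₃ ℂ :=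
  fun a b => ∑ i : ι₁, ∑ h : ι₂, Q (i, h, a) (i, h, b)

/-- In the weak teleportation setup of Proposition 3.1, for every density
operator `ρ` on `H₁` one has `tr₁₂₃ (F (ρ ⊗ |ψ⟩⟨ψ|) F) = 1/N` (a constant
independent of `ρ`), and consequently
`U ⬝ [tr₁₂ (F (ρ ⊗ |ψ⟩⟨ψ|) F) / tr (F (ρ ⊗ |ψ⟩⟨ψ|) F)] ⬝ U* = ρ`. -/
theorem weak_teleportation_trace_and_recovery
    (N : ℕ) (hN : 0 < N)
    (L : Matrix (Fin N) (Fin N) ℂ) (hL : L ∈ Matrix.unitaryGroup (Fin N) ℂ)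
    (ψ : Fin N × Fin N → ℂ) (hψ : ∀ h a, ψ (h, a) = L h a)
    (ξ : Fin N × Fin N → ℂ)
    (hξ : ∀ μ μ', ξ (μ, μ') = if μ = μ' then (((Real.sqrt N)⁻¹ : ℝ) : ℂ) else 0)
    (F : Matrix (Fin N × Fin N × Fin N) (Fin N × Fin N × Fin N) ℂ)
    (hF : ∀ p q, F p q =
      ξ (p.1, p.2.1) * star (ξ (q.1, q.2.1)) * (if p.2.2 = q.2.2 then 1 else 0))
    (U : Matrix (Fin N) (Fin N) ℂ) (hU : ∀ h a, U h a = star (L h a)) :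
    ∀ ρ : Matrix (Fin N) (Fin N) ℂ, ρ.PosSemidef → ρ.trace = 1 →
      (F * (Matrix.of fun (p q : Fin N × Fin N × Fin N) =>
          ρ p.1 q.1 * ψ p.2 * star (ψ q.2)) * F).trace = ((N : ℂ))⁻¹ ∧
      U * (((F * (Matrix.of fun (p q : Fin N × Fin N × Fin N) =>
          ρ p.1 q.1 * ψ p.2 * star (ψ q.2)) * F).trace)⁻¹ •
        ptrace12 (F * (Matrix.of fun (p q : Fin N × Fin N × Fin N) =>
          ρ p.1 q.1 * ψ p.2 * star (ψ q.2)) * F)) * U.conjTranspose = ρ := by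
  intro ρ hρ hρtr
  have hN' : (N : ℂ) ≠ 0 := Nat.cast_ne_zero.mpr hN.ne'
  -- `F` is a scaled projection onto diagonal indices
  have hF' : ∀ p q : Fin N × Fin N × Fin N, F p q =
      if p.1 = p.2.1 ∧ q.1 = q.2.1 ∧ p.2.2 = q.2.2 then ((N:ℂ))⁻¹ else 0 := by
    have hc : (((Real.sqrt N)⁻¹ : ℝ) : ℂ) * (((Real.sqrt N)⁻¹ : ℝ) : ℂ) = ((N:ℂ))⁻¹ := by
      rw [← Complex.ofReal_mul, ← mul_inv, Real.mul_self_sqrt (Nat.cast_nonneg N)]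
      push_cast; ring
    intro p q
    rw [hF, hξ, hξ]
    have hs : star (if q.1 = q.2.1 then (((Real.sqrt N)⁻¹ : ℝ) : ℂ) else 0)
        = if q.1 = q.2.1 then (((Real.sqrt N)⁻¹ : ℝ) : ℂ) else 0 := by
      split_ifs <;> simp [Complex.star_def, Complex.conj_ofReal]
    rw [hs]
    split_ifs <;> simp only [mul_one, mul_zero, zero_mul] <;> first | exact hc | rfl | tauto
  -- row orthonormality of `L`
  have row : ∀ i j : Fin N, (∑ c, L i c * star (L j c)) = if i = j then 1 else 0 := by
    intro i j
    have h1 : L * L.conjTranspose = 1 := Matrix.mem_unitaryGroup_iff.mp hL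
    have := congrFun (congrFun h1 i) j
    simpa [Matrix.mul_apply, Matrix.conjTranspose_apply, Matrix.one_apply] using this
  set G : Matrix (Fin N × Fin N × Fin N) (Fin N × Fin N × Fin N) ℂ :=
    F * (Matrix.of fun (p q : Fin N × Fin N × Fin N) =>
      ρ p.1 q.1 * ψ p.2 * star (ψ q.2)) * F with hGdef
  -- entries of `G`
  have hG : ∀ (i h a b : Fin N), G (i, h, a) (i, h, b) =
      if i = h then ((N:ℂ)⁻¹ * (N:ℂ)⁻¹) * ∑ r, ∑ s, ρ r s * L r a * star (L s b)
      else 0 := by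
    intro i h a b
    rw [hGdef]
    simp only [Matrix.mul_apply, Matrix.of_apply, hF', Fintype.sum_prod_type, ite_and,
      ite_mul, mul_ite, zero_mul, mul_zero, Finset.sum_ite_eq, Finset.sum_ite_eq',
      Finset.mem_univ, if_true, Finset.sum_ite_irrel, Finset.sum_const_zero]
    split_ifs with hih
    · simp only [hψ, Finset.sum_mul, Finset.mul_sum]
      rw [Finset.sum_comm]
      exact Finset.sum_congr rfl fun r _ => Finset.sum_congr rfl fun s _ => by ring
    · rfl
  -- the reduced double sum on the diagonal sums to `tr ρ = 1`
  have hSdiag : (∑ a : Fin N, ∑ r : Fin N, ∑ s : Fin N, ρ r s * L r a * star (L s a)) = 1 := by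
    have : (∑ a : Fin N, ∑ r : Fin N, ∑ s : Fin N, ρ r s * L r a * star (L s a))
        = ∑ r : Fin N, ∑ s : Fin N, ρ r s * ∑ a : Fin N, L r a * star (L s a) := by
      rw [Finset.sum_comm]
      refine Finset.sum_congr rfl fun r _ => ?_
      rw [Finset.sum_comm]
      refine Finset.sum_congr rfl fun s _ => ?_
      rw [Finset.mul_sum]
      exact Finset.sum_congr rfl fun a _ => by ring
    rw [this]
    simp only [row, mul_ite, mul_one, mul_zero, Finset.sum_ite_eq, Finset.mem_univ, if_true]
    simpa [Matrix.trace, Matrix.diag] using hρtr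
  have htr : G.trace = (N:ℂ)⁻¹ := by
    rw [Matrix.trace]
    simp only [Matrix.diag, Fintype.sum_prod_type, hG, Finset.sum_ite_irrel,
      Finset.sum_const_zero, Finset.sum_ite_eq, Finset.mem_univ, if_true]
    simp only [← Finset.mul_sum]
    rw [hSdiag, Finset.sum_const, Finset.card_univ, Fintype.card_fin, nsmul_eq_mul, mul_one]
    field_simp
  have hpt : ptrace12 G = (N:ℂ)⁻¹ • (L.transpose * ρ * L.conjTranspose.transpose) := by
    ext a b
    have hswap : (∑ r : Fin N, ∑ s : Fin N, ρ r s * L r a * star (L s b))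
        = ∑ s : Fin N, (∑ r : Fin N, L r a * ρ r s) * star (L s b) := by
      rw [Finset.sum_comm]
      refine Finset.sum_congr rfl fun s _ => ?_
      rw [Finset.sum_mul]
      exact Finset.sum_congr rfl fun r _ => by ring
    simp only [ptrace12, hG, Finset.sum_ite_eq, Finset.mem_univ, if_true,
      Matrix.smul_apply, Matrix.mul_apply, Matrix.transpose_apply,
      Matrix.conjTranspose_apply, smul_eq_mul]
    rw [hswap, Finset.sum_const, Finset.card_univ, Fintype.card_fin, nsmul_eq_mul]
    field_simp
  refine ⟨htr, ?_⟩
  rw [htr, hpt, inv_inv, smul_smul, mul_inv_cancel₀ hN', one_smul]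
  have hU2 : U = L.conjTranspose.transpose := by
    ext i j
    simp [hU, Matrix.transpose_apply, Matrix.conjTranspose_apply]
  have hUH : U.conjTranspose = L.transpose := by
    rw [hU2]; ext i j
    simp [Matrix.conjTranspose_apply, Matrix.transpose_apply]
  have h1 : L * L.conjTranspose = 1 := Matrix.mem_unitaryGroup_iff.mp hL
  have hid : L.conjTranspose.transpose * L.transpose = 1 := by
    rw [← Matrix.transpose_mul, h1, Matrix.transpose_one]
  rw [hUH, hU2]
  calc L.conjTranspose.transpose * (L.transpose * ρ * L.conjTranspose.transpose) * L.transpose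
      = L.conjTranspose.transpose * (L.transpose * (ρ * (L.conjTranspose.transpose * L.transpose))) := by
        simp only [mul_assoc]
    _ = L.conjTranspose.transpose * (L.transpose * ρ) := by rw [hid, mul_one]
    _ = (L.conjTranspose.transpose * L.transpose) * ρ := by rw [mul_assoc]
    _ = ρ := by rw [hid, one_mul]
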